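/- Let k and r be natural numbers and let 𝒢 be a k-complex satisfying e_k(𝒢) ≥ (r-1)·e_{k-1}(𝒢) + 1. Then the k-uniform level 𝒢^(k) contains a matching of size at least r. -/

import Mathlib

open Finset

variable {V : Type*} [DecidableEq V]

/-- The number of edges of cardinality `i` of a hypergraph. -/
def ecount (G : Finset (Finset V)) (i : ℕ) : ℕ := (G.filter fun e => e.card = i).card

section FranklMachinery

open UV
open scoped FinsetFamily

open Finset UV
open scoped FinsetFamily

namespace FranklAux

/-- matching predicate -/
def IsM (M : Finset (Finset ℕ)) : Prop := ∀ e ∈ M, ∀ f ∈ M, e ≠ f → Disjoint e f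

/-- matching number at most s -/
def NuLe (F : Finset (Finset ℕ)) (s : ℕ) : Prop := ∀ M ⊆ F, IsM M → M.card ≤ s

lemma lym {F : Finset (Finset ℕ)} {k n : ℕ} (hk : 1 ≤ k)
    (hu : ∀ e ∈ F, e.card = k) (hb : ∀ e ∈ F, e ⊆ range n) :
    k * F.card ≤ (n + 1 - k) * (∂ F).card := by
  have hshadow_card : ∀ f ∈ ∂ F, f.card = k - 1 := by
    intro f hf
    have : (F : Set (Finset ℕ)).Sized k := fun e he => hu e he
    exact Set.Sized.shadow this hf
  have hshadow_sub : ∀ f ∈ ∂ F, f ⊆ range n := by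
    intro f hf
    rw [mem_shadow_iff] at hf
    obtain ⟨e, he, a, ha, rfl⟩ := hf
    exact (erase_subset _ _).trans (hb e he)
  have hP : (F.sigma fun e => e).card = k * F.card := by
    rw [card_sigma]
    rw [Finset.sum_congr rfl (fun e he => hu e he), sum_const, smul_eq_mul, mul_comm]
  have hQ : ((∂ F).sigma fun f => range n \ f).card = (n + 1 - k) * (∂ F).card := by
    rw [card_sigma]
    have : ∀ f ∈ ∂ F, (range n \ f).card = n + 1 - k := by
      intro f hf
      rw [card_sdiff_of_subset (hshadow_sub f hf), card_range, hshadow_card f hf]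
      omega
    rw [Finset.sum_congr rfl this, sum_const, smul_eq_mul, mul_comm]
  rw [← hP, ← hQ]
  apply card_le_card_of_injOn (fun p => ⟨p.1.erase p.2, p.2⟩)
  · rintro ⟨e, x⟩ hp
    simp only [mem_coe, mem_sigma] at hp ⊢
    refine ⟨erase_mem_shadow hp.1 hp.2, ?_⟩
    rw [mem_sdiff]
    exact ⟨hb e hp.1 hp.2, notMem_erase _ _⟩
  · rintro ⟨e, x⟩ hp ⟨e', x'⟩ hp' h
    simp only [mem_coe, mem_sigma] at hp hp'
    simp only [Sigma.mk.inj_iff] at h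
    obtain ⟨h1, h2⟩ := h
    have hx : x = x' := by exact eq_of_heq h2
    subst hx
    have : e = e' := by
      rw [← insert_erase hp.2, ← insert_erase hp'.2, h1]
    simp [this]

end FranklAux

namespace FranklAux2
open FranklAux

lemma compress_apply {u v : ℕ} (A : Finset ℕ) (hu : u ∉ A) (hv : v ∈ A) :
    compress {u} {v} A = insert u (A.erase v) := by
  have huv : u ≠ v := fun h => hu (h ▸ hv)
  rw [compress, if_pos ⟨Finset.disjoint_singleton_left.2 hu, singleton_subset_iff.2 hv⟩]
  ext x
  simp only [sup_eq_union, mem_sdiff, mem_union, mem_singleton, mem_insert, mem_erase]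
  constructor
  · rintro ⟨h1 | h1, h2⟩
    · exact Or.inr ⟨h2, h1⟩
    · exact Or.inl h1
  · rintro (rfl | ⟨h1, h2⟩)
    · exact ⟨Or.inr rfl, huv⟩
    · exact ⟨Or.inl h2, h1⟩

lemma compress_ne_cases {u v : ℕ} {A : Finset ℕ} (h : compress {u} {v} A ≠ A) :
    u ∉ A ∧ v ∈ A := by
  rw [compress] at h
  split_ifs at h with hc
  · exact ⟨Finset.disjoint_singleton_left.1 hc.1, singleton_subset_iff.1 hc.2⟩
  · exact absurd rfl h

/-- family measure -/
def mu (F : Finset (Finset ℕ)) : ℕ := ∑ A ∈ F, ∑ a ∈ A, a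

lemma sum_compress_lt {u v : ℕ} (huv : u < v) {A : Finset ℕ} (h : compress {u} {v} A ≠ A) :
    ∑ a ∈ compress {u} {v} A, a < ∑ a ∈ A, a := by
  obtain ⟨hu, hv⟩ := compress_ne_cases h
  rw [compress_apply A hu hv, Finset.sum_insert (fun hx => hu (mem_of_mem_erase hx))]
  have h2 : v + ∑ a ∈ A.erase v, a = ∑ a ∈ A, a := Finset.add_sum_erase _ id hv
  omega

lemma mu_compression_lt {u v : ℕ} (huv : u < v) {F : Finset (Finset ℕ)}
    (h : 𝓒 {u} {v} F ≠ F) : mu (𝓒 {u} {v} F) < mu F := by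
  rw [compression] at h ⊢
  have q : ∀ Q ∈ {A ∈ F | compress {u} {v} A ∉ F}, compress {u} {v} Q ≠ Q := by
    simp_rw [mem_filter]
    intro Q hQ hh
    rw [hh] at hQ
    exact hQ.2 hQ.1
  have uA : {A ∈ F | compress {u} {v} A ∈ F} ∪ {A ∈ F | compress {u} {v} A ∉ F} = F :=
    filter_union_filter_not_eq _ _
  have ne₂ : {A ∈ F | compress {u} {v} A ∉ F}.Nonempty := by
    refine nonempty_iff_ne_empty.2 fun z => h ?_
    rw [filter_image, z, image_empty, union_empty]
    rwa [z, union_empty] at uA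
  rw [mu, mu, sum_union compress_disjoint]
  conv_rhs => rw [← uA]
  rw [sum_union (disjoint_filter_filter_not _ _ _), add_lt_add_iff_left, filter_image,
    sum_image compress_injOn]
  exact sum_lt_sum_of_nonempty ne₂ fun A hA => sum_compress_lt huv (q _ hA)

end FranklAux2

namespace FranklAux3
open FranklAux FranklAux2

lemma swap_eq {u v : ℕ} (huv : u ≠ v) {m : Finset ℕ} (hu : u ∈ m) (hv : v ∉ m) :
    (m ⊔ {v}) \ {u} = insert v (m.erase u) := by
  ext x
  simp only [sup_eq_union, mem_sdiff, mem_union, mem_singleton, mem_insert, mem_erase]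
  constructor
  · rintro ⟨h1 | h1, h2⟩
    · exact Or.inr ⟨h2, h1⟩
    · exact Or.inl h1
  · rintro (rfl | ⟨h1, h2⟩)
    · exact ⟨Or.inr rfl, fun h => huv h.symm⟩
    · exact ⟨Or.inl h2, h1⟩

lemma matching_of_compression {u v : ℕ} (huv : u ≠ v) {F M : Finset (Finset ℕ)}
    (hM : M ⊆ 𝓒 {u} {v} F) (hm : IsM M) : ∃ M', M' ⊆ F ∧ IsM M' ∧ M.card ≤ M'.card := by
  by_cases hMF : ∀ m ∈ M, m ∈ F
  · exact ⟨M, fun x hx => hMF x hx, hm, le_rfl⟩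
  push_neg at hMF
  obtain ⟨m, hmM, hmF⟩ := hMF
  have hu : u ∈ m := singleton_subset_iff.1 (le_of_mem_compression_of_notMem (hM hmM) hmF)
  have hv : v ∉ m := Finset.disjoint_singleton_left.1
    (disjoint_of_mem_compression_of_notMem (hM hmM) hmF)
  have hbF : insert v (m.erase u) ∈ F := by
    have := sup_sdiff_mem_of_mem_compression_of_notMem (hM hmM) hmF
    rwa [swap_eq huv hu hv] at this
  set b := insert v (m.erase u) with hbdef
  have hvb : v ∈ b := mem_insert_self _ _
  have hub : u ∉ b := by
    simp only [hbdef, mem_insert, mem_erase]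
    rintro (h | ⟨h, -⟩) <;> [exact huv h; exact h rfl]
  have hothers : ∀ m₂ ∈ M, m₂ ≠ m → m₂ ∈ F ∧ u ∉ m₂ := by
    intro m₂ hm₂ hne
    have hum₂ : u ∉ m₂ := disjoint_left.1 (hm m hmM m₂ hm₂ (Ne.symm hne)) hu
    refine ⟨?_, hum₂⟩
    by_contra hm₂F
    exact hum₂ (singleton_subset_iff.1 (le_of_mem_compression_of_notMem (hM hm₂) hm₂F))
  by_cases hcase : ∃ m₂ ∈ M, m₂ ≠ m ∧ v ∈ m₂
  · -- the "double swap" case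
    obtain ⟨m₂, hm₂M, hm₂ne, hvm₂⟩ := hcase
    obtain ⟨hm₂F, hum₂⟩ := hothers m₂ hm₂M hm₂ne
    have hcF : insert u (m₂.erase v) ∈ F := by
      have h2 := hM hm₂M
      rw [mem_compression] at h2
      rcases h2 with ⟨-, h2⟩ | ⟨h2, -⟩
      · rwa [compress_apply m₂ hum₂ hvm₂] at h2
      · exact absurd hm₂F h2
    set c := insert u (m₂.erase v) with hcdef
    have huc : u ∈ c := mem_insert_self _ _
    have hvc : v ∉ c := by
      simp only [hcdef, mem_insert, mem_erase]
      rintro (h | ⟨h, -⟩) <;> [exact huv h.symm; exact h rfl]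
    set R := (M.erase m).erase m₂ with hRdef
    have hRfacts : ∀ m₃ ∈ R, m₃ ∈ M ∧ m₃ ≠ m ∧ m₃ ≠ m₂ := by
      intro m₃ h₃
      exact ⟨mem_of_mem_erase (mem_of_mem_erase h₃), ne_of_mem_erase (mem_of_mem_erase h₃),
        ne_of_mem_erase h₃⟩
    have hR : ∀ m₃ ∈ R, m₃ ∈ F ∧ u ∉ m₃ ∧ v ∉ m₃ := by
      intro m₃ h₃
      obtain ⟨h₃M, h₃m, h₃m₂⟩ := hRfacts m₃ h₃
      obtain ⟨h₃F, h₃u⟩ := hothers m₃ h₃M h₃m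
      exact ⟨h₃F, h₃u, disjoint_left.1 (hm m₂ hm₂M m₃ h₃M (Ne.symm h₃m₂)) hvm₂⟩
    have hdisj_bc : Disjoint b c := by
      rw [hbdef, Finset.disjoint_insert_left]
      refine ⟨hvc, ?_⟩
      rw [hcdef, Finset.disjoint_insert_right]
      refine ⟨fun h => (notMem_erase u m) h, ?_⟩
      exact Finset.disjoint_of_subset_left (erase_subset _ _)
        (Finset.disjoint_of_subset_right (erase_subset _ _) (hm m hmM m₂ hm₂M (Ne.symm hm₂ne)))
    have hdisj_bR : ∀ m₃ ∈ R, Disjoint b m₃ := by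
      intro m₃ h₃
      obtain ⟨h₃M, h₃m, h₃m₂⟩ := hRfacts m₃ h₃
      rw [hbdef, Finset.disjoint_insert_left]
      exact ⟨(hR m₃ h₃).2.2, Finset.disjoint_of_subset_left (erase_subset _ _)
        (hm m hmM m₃ h₃M (Ne.symm h₃m))⟩
    have hdisj_cR : ∀ m₃ ∈ R, Disjoint c m₃ := by
      intro m₃ h₃
      obtain ⟨h₃M, h₃m, h₃m₂⟩ := hRfacts m₃ h₃
      rw [hcdef, Finset.disjoint_insert_left]
      exact ⟨(hR m₃ h₃).2.1, Finset.disjoint_of_subset_left (erase_subset _ _)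
        (hm m₂ hm₂M m₃ h₃M (Ne.symm h₃m₂))⟩
    refine ⟨insert b (insert c R), ?_, ?_, ?_⟩
    · intro x hx
      rcases mem_insert.1 hx with rfl | hx
      · exact hbF
      rcases mem_insert.1 hx with rfl | hx
      · exact hcF
      · exact (hR x hx).1
    · intro e he f hf hef
      rcases mem_insert.1 he with rfl | he <;> [skip; rcases mem_insert.1 he with rfl | he] <;>
        rcases mem_insert.1 hf with rfl | hf
      · exact absurd rfl hef
      · rcases mem_insert.1 hf with rfl | hf
        · exact hdisj_bc
        · exact hdisj_bR _ hf
      · exact hdisj_bc.symm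
      · rcases mem_insert.1 hf with rfl | hf
        · exact absurd rfl hef
        · exact hdisj_cR _ hf
      · exact (hdisj_bR _ he).symm
      · rcases mem_insert.1 hf with rfl | hf
        · exact (hdisj_cR _ he).symm
        · exact hm e (hRfacts e he).1 f (hRfacts f hf).1 hef
    · have hcR : c ∉ R := fun h => (hR c h).2.1 huc
      have hbcR : b ∉ insert c R := by
        intro h
        rcases mem_insert.1 h with h | h
        · exact hvc (h ▸ hvb)
        · exact (hR b h).2.2 hvb
      rw [card_insert_of_notMem hbcR, card_insert_of_notMem hcR]
      have h1 : m₂ ∈ M.erase m := mem_erase.2 ⟨hm₂ne, hm₂M⟩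
      have h2 : R.card = M.card - 2 := by
        rw [hRdef, card_erase_of_mem h1, card_erase_of_mem hmM]
        omega
      have h3 : 1 < M.card := Finset.one_lt_card.2 ⟨m, hmM, m₂, hm₂M, Ne.symm hm₂ne⟩
      omega
  · -- the "single swap" case
    push_neg at hcase
    refine ⟨insert b (M.erase m), ?_, ?_, ?_⟩
    · intro x hx
      rcases mem_insert.1 hx with rfl | hx
      · exact hbF
      · exact (hothers x (mem_of_mem_erase hx) (ne_of_mem_erase hx)).1
    · intro e he f hf hef
      have key : ∀ f' ∈ M.erase m, Disjoint b f' := by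
        intro f' hf'
        rw [hbdef, Finset.disjoint_insert_left]
        exact ⟨hcase f' (mem_of_mem_erase hf') (ne_of_mem_erase hf'),
          Finset.disjoint_of_subset_left (erase_subset _ _)
            (hm m hmM f' (mem_of_mem_erase hf') (Ne.symm (ne_of_mem_erase hf')))⟩
      rcases mem_insert.1 he with rfl | he <;> rcases mem_insert.1 hf with rfl | hf
      · exact absurd rfl hef
      · exact key _ hf
      · exact (key _ he).symm
      · exact hm e (mem_of_mem_erase he) f (mem_of_mem_erase hf) hef
    · have hbM : b ∉ M.erase m := fun h =>
        hcase b (mem_of_mem_erase h) (ne_of_mem_erase h) hvb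
      rw [card_insert_of_notMem hbM, card_erase_of_mem hmM]
      have : 0 < M.card := card_pos.2 ⟨m, hmM⟩
      omega

lemma nule_compression {u v : ℕ} (huv : u ≠ v) {F : Finset (Finset ℕ)} {s : ℕ}
    (h : NuLe F s) : NuLe (𝓒 {u} {v} F) s := by
  intro M hM hm
  obtain ⟨M', hM'F, hM'm, hcard⟩ := matching_of_compression huv hM hm
  exact hcard.trans (h M' hM'F hM'm)

end FranklAux3

namespace FranklAux4
open FranklAux FranklAux2 FranklAux3

/-- `F` is fully shifted on `range n`. -/
def Shifted (n : ℕ) (F : Finset (Finset ℕ)) : Prop :=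
  ∀ u v : ℕ, u < v → v < n → IsCompressed {u} {v} F

lemma link_mem {n : ℕ} {F : Finset (Finset ℕ)} {f : Finset ℕ}
    (hf : f ∈ (F.filter fun e => n - 1 ∈ e).image fun e => e.erase (n - 1)) :
    insert (n - 1) f ∈ F ∧ n - 1 ∉ f := by
  obtain ⟨e, he, rfl⟩ := mem_image.1 hf
  rw [mem_filter] at he
  rw [insert_erase he.2]
  exact ⟨he.1, notMem_erase _ _⟩

lemma link_sub {n : ℕ} {F : Finset (Finset ℕ)} (hb : ∀ e ∈ F, e ⊆ range n) {f : Finset ℕ}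
    (hf : f ∈ (F.filter fun e => n - 1 ∈ e).image fun e => e.erase (n - 1)) :
    f ⊆ range (n - 1) := by
  obtain ⟨e, he, rfl⟩ := mem_image.1 hf
  rw [mem_filter] at he
  intro x hx
  have h1 := hb e he.1 (mem_of_mem_erase hx)
  have h2 := ne_of_mem_erase hx
  rw [mem_range] at h1 ⊢
  omega

lemma nule_link {n k s : ℕ} {F : Finset (Finset ℕ)} (hk : 2 ≤ k) (hn : k * (s + 1) ≤ n)
    (hu : ∀ e ∈ F, e.card = k) (hb : ∀ e ∈ F, e ⊆ range n) (hsh : Shifted n F)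
    (hnu : NuLe F s) :
    NuLe ((F.filter fun e => n - 1 ∈ e).image fun e => e.erase (n - 1)) s := by
  set L := (F.filter fun e => n - 1 ∈ e).image fun e => e.erase (n - 1) with hLdef
  intro M hML hm
  by_contra hlarge
  push_neg at hlarge
  obtain ⟨M₀, hM₀M, hM₀card⟩ := Finset.exists_subset_card_eq (n := s + 1) hlarge
  have hM₀L : M₀ ⊆ L := hM₀M.trans hML
  have hm₀ : IsM M₀ := fun e he f hf => hm e (hM₀M he) f (hM₀M hf)
  -- each element has card k - 1
  have hcard₀ : ∀ f ∈ M₀, f.card = k - 1 := by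
    intro f hf
    obtain ⟨hfF, hfn⟩ := link_mem (hM₀L hf)
    have := hu _ hfF
    rw [card_insert_of_notMem hfn] at this
    omega
  set W := M₀.biUnion id with hWdef
  have hWsub : W ⊆ range (n - 1) := by
    intro x hx
    obtain ⟨f, hf, hxf⟩ := mem_biUnion.1 hx
    exact link_sub hb (hM₀L hf) hxf
  have hWcard : W.card = (s + 1) * (k - 1) := by
    have h'' := card_biUnion (s := M₀) (t := id) (fun x hx y hy hxy => hm₀ x hx y hy hxy)
    rw [hWdef, h'']
    have h' : ∀ f ∈ M₀, (id f).card = k - 1 := fun f hf => hcard₀ f hf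
    rw [Finset.sum_congr rfl h', sum_const, hM₀card, smul_eq_mul]
  -- fresh vertices
  have hUcard : s ≤ ((range (n - 1)) \ W).card := by
    rw [card_sdiff_of_subset hWsub, card_range, hWcard]
    have hk1 : (s + 1) * (k - 1) + (s + 1) = k * (s + 1) := by
      have h' : k - 1 + 1 = k := by omega
      calc (s + 1) * (k - 1) + (s + 1) = (k - 1 + 1) * (s + 1) := by ring
        _ = k * (s + 1) := by rw [h']
    omega
  obtain ⟨U', hU'sub, hU'card⟩ := Finset.exists_subset_card_eq hUcard
  obtain ⟨f₀, hf₀⟩ := Finset.card_pos.1 (by rw [hM₀card]; omega : 0 < M₀.card)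
  set M₁ := M₀.erase f₀ with hM₁def
  have hM₁card : M₁.card = s := by rw [hM₁def, card_erase_of_mem hf₀, hM₀card]; omega
  have hcards : M₁.card = U'.card := by rw [hM₁card, hU'card]
  set σ := Finset.equivOfCardEq hcards with hσdef
  -- facts about fresh vertices
  have hUfact : ∀ x ∈ U', x < n - 1 ∧ ∀ g ∈ M₀, x ∉ g := by
    intro x hx
    have := hU'sub hx
    rw [mem_sdiff, mem_range] at this
    exact ⟨this.1, fun g hg hxg => this.2 (mem_biUnion.2 ⟨g, hg, hxg⟩)⟩
  -- the new matching edges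
  have hedge : ∀ f : {x // x ∈ M₁}, insert (↑(σ f) : ℕ) (f : Finset ℕ) ∈ F := by
    intro f
    have hfM₀ : (f : Finset ℕ) ∈ M₀ := mem_of_mem_erase f.2
    obtain ⟨hfF, hfn⟩ := link_mem (hM₀L hfM₀)
    have hux := hUfact _ (σ f).2
    have hun : (↑(σ f) : ℕ) < n - 1 := hux.1
    have hun2 : (↑(σ f) : ℕ) ∉ (f : Finset ℕ) := hux.2 _ hfM₀
    have hn1 : (1 : ℕ) ≤ n := by omega
    have hcomp := hsh (↑(σ f)) (n - 1) hun (by omega)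
    have he : insert (n - 1) (f : Finset ℕ) ∈ 𝓒 {(↑(σ f) : ℕ)} {n - 1} F := by
      rw [hcomp.eq]; exact hfF
    have hres := sup_sdiff_mem_of_mem_compression he
      (singleton_subset_iff.2 (mem_insert_self _ _))
      (Finset.disjoint_singleton_left.2 (by
        rw [mem_insert]; rintro (h | h) <;> [omega; exact hun2 h]))
    rwa [swap_eq (show (n-1 : ℕ) ≠ ↑(σ f) by omega) (mem_insert_self _ _)
      (by rw [mem_insert]; rintro (h | h) <;> [omega; exact hun2 h]),
      erase_insert hfn] at hres
  -- build matching in F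
  set g : {x // x ∈ M₁} → Finset ℕ := fun f => insert (↑(σ f) : ℕ) (f : Finset ℕ) with hgdef
  have hginj : Function.Injective g := by
    intro f f' hff
    have h1 : (↑(σ f) : ℕ) ∈ g f' := hff ▸ mem_insert_self _ _
    have h2 := hUfact _ (σ f).2
    rcases mem_insert.1 h1 with h | h
    swap
    · exact absurd h (h2.2 _ (mem_of_mem_erase f'.2))
    have hσff : σ f = σ f' := Subtype.ext h
    have hff' : f = f' := σ.injective hσff
    exact hff'
  set E₀ : Finset ℕ := insert (n - 1) f₀ with hE₀def
  have hE₀F : E₀ ∈ F := (link_mem (hM₀L hf₀)).1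
  have hn1E : n - 1 ∉ f₀ := (link_mem (hM₀L hf₀)).2
  have hgn : ∀ f : {x // x ∈ M₁}, n - 1 ∉ g f := by
    intro f
    rw [hgdef, mem_insert]
    have h2 := hUfact _ (σ f).2
    rintro (h | h)
    · omega
    · exact (link_mem (hM₀L (mem_of_mem_erase f.2))).2 h
  set M' := insert E₀ (M₁.attach.image g) with hM'def
  have hM'sub : M' ⊆ F := by
    intro x hx
    rcases mem_insert.1 hx with rfl | hx
    · exact hE₀F
    obtain ⟨f, -, rfl⟩ := mem_image.1 hx
    exact hedge f
  have hM'card : M'.card = s + 1 := by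
    rw [hM'def, card_insert_of_notMem, card_image_of_injective _ hginj, card_attach, hM₁card]
    intro h
    obtain ⟨f, -, hf⟩ := mem_image.1 h
    exact hgn f (hf ▸ mem_insert_self _ _)
  have hM'm : IsM M' := by
    have hgdis : ∀ (f f' : {x // x ∈ M₁}), f ≠ f' → Disjoint (g f) (g f') := by
      intro f f' hne
      rw [hgdef, Finset.disjoint_insert_left, Finset.disjoint_insert_right]
      have h2 := hUfact _ (σ f).2
      have h2' := hUfact _ (σ f').2
      have hσne : (↑(σ f) : ℕ) ≠ ↑(σ f') := by
        intro h
        exact hne (σ.injective (Subtype.ext h))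
      have hvalne : (f : Finset ℕ) ≠ (f' : Finset ℕ) := fun h => hne (Subtype.ext h)
      refine ⟨?_, h2'.2 _ (mem_of_mem_erase f.2), hm₀ _ (mem_of_mem_erase f.2) _
        (mem_of_mem_erase f'.2) hvalne⟩
      rw [mem_insert]
      rintro (h | h)
      · exact hσne h
      · exact h2.2 _ (mem_of_mem_erase f'.2) h
    have hE₀dis : ∀ f : {x // x ∈ M₁}, Disjoint E₀ (g f) := by
      intro f
      rw [hE₀def, Finset.disjoint_insert_left, hgdef, Finset.disjoint_insert_right]
      have h2 := hUfact _ (σ f).2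
      have hvalne : f₀ ≠ (f : Finset ℕ) := Ne.symm (ne_of_mem_erase f.2)
      refine ⟨?_, h2.2 _ hf₀, hm₀ _ hf₀ _ (mem_of_mem_erase f.2) hvalne⟩
      rw [mem_insert]
      rintro (h | h)
      · omega
      · exact (link_mem (hM₀L (mem_of_mem_erase f.2))).2 h
    intro e he f hf hef
    rcases mem_insert.1 he with rfl | he <;> rcases mem_insert.1 hf with rfl | hf
    · exact absurd rfl hef
    · obtain ⟨f', -, rfl⟩ := mem_image.1 hf
      exact hE₀dis f'
    · obtain ⟨e', -, rfl⟩ := mem_image.1 he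
      exact (hE₀dis e').symm
    · obtain ⟨e', -, rfl⟩ := mem_image.1 he
      obtain ⟨f', -, rfl⟩ := mem_image.1 hf
      exact hgdis e' f' (fun h => hef (h ▸ rfl))
  have := hnu M' hM'sub hM'm
  omega

end FranklAux4

namespace FranklAux5
open FranklAux FranklAux2 FranklAux3 FranklAux4

lemma card_split {n : ℕ} (F : Finset (Finset ℕ)) :
    F.card = (F.filter fun e => n - 1 ∉ e).card
      + ((F.filter fun e => n - 1 ∈ e).image fun e => e.erase (n - 1)).card := by
  have himg : ((F.filter fun e => n - 1 ∈ e).image fun e => e.erase (n - 1)).card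
      = (F.filter fun e => n - 1 ∈ e).card := by
    apply card_image_of_injOn
    intro e he e' he' h
    rw [mem_coe, mem_filter] at he he'
    simp only at h
    rw [← insert_erase he.2, ← insert_erase he'.2, h]
  rw [himg]
  have h1 := card_filter_add_card_filter_not (s := F) (p := fun e => n - 1 ∈ e)
  have h2 : #(filter (fun a => ¬(fun e => n - 1 ∈ e) a) F) = #(filter (fun e => n - 1 ∉ e) F) := rfl
  omega

lemma shadow_split {n : ℕ} {F : Finset (Finset ℕ)} (hb : ∀ e ∈ F, e ⊆ range n) :
    (∂ (F.filter fun e => n - 1 ∉ e)).card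
      + (∂ ((F.filter fun e => n - 1 ∈ e).image fun e => e.erase (n - 1))).card
      ≤ (∂ F).card := by
  set F₀ := F.filter fun e => n - 1 ∉ e with hF₀
  set L := (F.filter fun e => n - 1 ∈ e).image fun e => e.erase (n - 1) with hL
  have h1 : ∂ F₀ ⊆ ∂ F := shadow_monotone (filter_subset _ _)
  have hLn : ∀ l ∈ L, n - 1 ∉ l := fun l hl => (link_mem hl).2
  have h2 : (∂ L).image (insert (n - 1)) ⊆ ∂ F := by
    intro t ht
    obtain ⟨g, hg, rfl⟩ := mem_image.1 ht
    obtain ⟨a, hag, haL⟩ := mem_shadow_iff_insert_mem.1 hg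
    have hmem := link_mem haL
    have hsub := link_sub hb haL
    have ha : a < n - 1 := by
      have := hsub (mem_insert_self a g)
      rwa [mem_range] at this
    apply mem_shadow_iff_insert_mem.2
    refine ⟨a, ?_, ?_⟩
    · rw [mem_insert]
      rintro (h | h) <;> [omega; exact hag h]
    · rw [Finset.insert_comm]
      exact hmem.1
  have h3 : Disjoint (∂ F₀) ((∂ L).image (insert (n - 1))) := by
    rw [disjoint_left]
    intro t ht htim
    obtain ⟨e, he, a, ha, rfl⟩ := mem_shadow_iff.1 ht
    rw [hF₀, mem_filter] at he
    obtain ⟨g, -, hgeq⟩ := mem_image.1 htim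
    have hmem : n - 1 ∈ e.erase a := hgeq ▸ mem_insert_self (n - 1) g
    exact he.2 (mem_of_mem_erase hmem)
  have h4 : ((∂ L).image (insert (n - 1))).card = (∂ L).card := by
    apply card_image_of_injOn
    intro g hg g' hg' h
    rw [mem_coe] at hg hg'
    have hng : n - 1 ∉ g := by
      obtain ⟨l, hl, a, ha, rfl⟩ := mem_shadow_iff.1 hg
      exact fun hx => hLn l hl (mem_of_mem_erase hx)
    have hng' : n - 1 ∉ g' := by
      obtain ⟨l, hl, a, ha, rfl⟩ := mem_shadow_iff.1 hg'
      exact fun hx => hLn l hl (mem_of_mem_erase hx)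
    rw [← erase_insert hng, ← erase_insert hng', h]
  calc (∂ F₀).card + (∂ L).card
      = (∂ F₀).card + ((∂ L).image (insert (n - 1))).card := by rw [h4]
    _ = ((∂ F₀) ∪ (∂ L).image (insert (n - 1))).card := (card_union_of_disjoint h3).symm
    _ ≤ (∂ F).card := card_le_card (union_subset h1 h2)

theorem frankl : ∀ (n : ℕ) (F : Finset (Finset ℕ)) (k s : ℕ), 1 ≤ k →
    (∀ e ∈ F, e.card = k) → (∀ e ∈ F, e ⊆ range n) → NuLe F s →
    F.card ≤ s * (∂ F).card := by
  intro n
  induction n using Nat.strong_induction_on with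
  | _ n IHn =>
  suffices H : ∀ m : ℕ, ∀ F : Finset (Finset ℕ), ∀ k s : ℕ, mu F = m → 1 ≤ k →
      (∀ e ∈ F, e.card = k) → (∀ e ∈ F, e ⊆ range n) → NuLe F s →
      F.card ≤ s * (∂ F).card by
    intro F k s hk h1 h2 h3
    exact H (mu F) F k s rfl hk h1 h2 h3
  intro m
  induction m using Nat.strong_induction_on with
  | _ m IHm =>
  intro F k s hmu hk huni hbound hnu
  by_cases hsh : Shifted n F
  swap
  · -- compress further
    rw [Shifted] at hsh
    push_neg at hsh
    obtain ⟨u, v, huv, hvn, hncomp⟩ := hsh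
    have hmu' : mu (𝓒 {u} {v} F) < m := hmu ▸ mu_compression_lt huv hncomp
    have huniC : ∀ e ∈ 𝓒 {u} {v} F, e.card = k := by
      have hsz : ((𝓒 {u} {v} F : Finset (Finset ℕ)) : Set (Finset ℕ)).Sized k :=
        Set.Sized.uvCompression (by simp) (fun e he => huni e he)
      exact fun e he => hsz he
    have hboundC : ∀ e ∈ 𝓒 {u} {v} F, e ⊆ range n := by
      intro e he
      rw [mem_compression] at he
      rcases he with ⟨heF, -⟩ | ⟨-, b, hbF, rfl⟩
      · exact hbound e heF
      · rw [compress]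
        split_ifs with hc
        · intro x hx
          rw [mem_sdiff, sup_eq_union, mem_union] at hx
          rcases hx.1 with hxb | hxu
          · exact hbound b hbF hxb
          · rw [mem_singleton] at hxu
            rw [mem_range]; omega
        · exact hbound b hbF
    have hsingle : ∀ x ∈ ({u} : Finset ℕ), ∃ y ∈ ({v} : Finset ℕ),
        IsCompressed (({u} : Finset ℕ).erase x) (({v} : Finset ℕ).erase y) F := by
      intro x hx
      rw [mem_singleton] at hx
      subst hx
      refine ⟨v, mem_singleton_self v, ?_⟩
      rw [erase_singleton, erase_singleton]
      exact isCompressed_self _ _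
    calc F.card = (𝓒 {u} {v} F).card := (card_compression _ _ _).symm
      _ ≤ s * (∂ (𝓒 {u} {v} F)).card := IHm _ hmu' _ k s rfl hk huniC hboundC
          (nule_compression (Nat.ne_of_lt huv) hnu)
      _ ≤ s * (∂ F).card := Nat.mul_le_mul_left s (card_shadow_compression_le _ _ hsingle)
  · -- shifted
    rcases eq_or_lt_of_le hk with hk1 | hk2
    · -- k = 1 : F is itself a matching
      rcases F.eq_empty_or_nonempty with rfl | hFne
      · simp
      have hFm : IsM F := by
        intro e he f hf hef
        obtain ⟨x, rfl⟩ := card_eq_one.1 ((huni e he).trans hk1.symm)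
        obtain ⟨y, rfl⟩ := card_eq_one.1 ((huni f hf).trans hk1.symm)
        rw [Finset.disjoint_singleton_left, mem_singleton]
        exact fun h => hef (by rw [h])
      have hc1 : F.card ≤ s := hnu F Subset.rfl hFm
      obtain ⟨e, he⟩ := hFne
      have hshadne : 0 < (∂ F).card := by
        apply card_pos.2
        obtain ⟨x, rfl⟩ := card_eq_one.1 ((huni e he).trans hk1.symm)
        exact ⟨∅, by simpa using erase_mem_shadow he (mem_singleton_self x)⟩
      calc F.card ≤ s := hc1
        _ ≤ s * (∂ F).card := Nat.le_mul_of_pos_right s hshadne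
    · by_cases hsize : n + 1 ≤ k * (s + 1)
      · -- LYM case
        have hlym := lym hk huni hbound
        have hmul : k * (s + 1) = k * s + k := by ring
        have h2 : n + 1 - k ≤ k * s := by omega
        have h3 : k * F.card ≤ k * (s * (∂ F).card) := by
          calc k * F.card ≤ (n + 1 - k) * (∂ F).card := hlym
            _ ≤ k * s * (∂ F).card := Nat.mul_le_mul_right _ h2
            _ = k * (s * (∂ F).card) := by ring
        exact Nat.le_of_mul_le_mul_left h3 (by omega)
      · -- recursive case
        push_neg at hsize
        have hsize' : k * (s + 1) ≤ n := by omega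
        have hn2 : 2 ≤ n := le_trans (by nlinarith) hsize'
        set F₀ := F.filter fun e => n - 1 ∉ e with hF₀
        set L := (F.filter fun e => n - 1 ∈ e).image fun e => e.erase (n - 1) with hL
        have hF₀uni : ∀ e ∈ F₀, e.card = k := fun e he => huni e (mem_of_mem_filter e he)
        have hF₀bound : ∀ e ∈ F₀, e ⊆ range (n - 1) := by
          intro e he x hx
          rw [hF₀, mem_filter] at he
          have h1 := hbound e he.1 hx
          rw [mem_range] at h1 ⊢
          have := he.2
          have hxe : x ≠ n - 1 := fun h => this (h ▸ hx)
          omega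
        have hF₀nu : NuLe F₀ s := fun M hM hmM => hnu M (hM.trans (filter_subset _ _)) hmM
        have hLuni : ∀ f ∈ L, f.card = k - 1 := by
          intro f hf
          obtain ⟨hfF, hfn⟩ := link_mem hf
          have := huni _ hfF
          rw [card_insert_of_notMem hfn] at this
          omega
        have hLbound : ∀ f ∈ L, f ⊆ range (n - 1) := fun f hf => link_sub hbound hf
        have hLnu : NuLe L s := nule_link hk2 hsize' huni hbound hsh hnu
        have hrec₀ := IHn (n - 1) (by omega) F₀ k s hk hF₀uni hF₀bound hF₀nu
        have hrecL := IHn (n - 1) (by omega) L (k - 1) s (by omega) hLuni hLbound hLnu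
        calc F.card = F₀.card + L.card := card_split F
          _ ≤ s * (∂ F₀).card + s * (∂ L).card := Nat.add_le_add hrec₀ hrecL
          _ = s * ((∂ F₀).card + (∂ L).card) := by ring
          _ ≤ s * (∂ F).card := Nat.mul_le_mul_left s (shadow_split hbound)

end FranklAux5

open FranklAux FranklAux5 in
theorem matching_of_ratio' {V : Type*} [DecidableEq V] (k r : ℕ) (𝒢 : Finset (Finset V))
    (hdown : ∀ e ∈ 𝒢, ∀ f, f ⊆ e → f ∈ 𝒢)
    (hbound : ∀ e ∈ 𝒢, e.card ≤ k)
    (hcount : (r - 1) * ((𝒢.filter fun e => e.card = k - 1).card) + 1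
      ≤ ((𝒢.filter fun e => e.card = k).card)) :
    ∃ M : Finset (Finset V), M ⊆ 𝒢 ∧ (∀ e ∈ M, e.card = k) ∧
      (∀ e ∈ M, ∀ f ∈ M, e ≠ f → Disjoint e f) ∧ r ≤ M.card := by
  rcases Nat.eq_zero_or_pos r with rfl | hr
  · exact ⟨∅, by simp⟩
  rcases Nat.eq_zero_or_pos k with rfl | hk
  · -- k = 0
    have h0 : (0 : ℕ) - 1 = 0 := rfl
    rw [h0] at hcount
    set c := (𝒢.filter fun e => e.card = 0).card with hc
    have hr1 : r = 1 := by
      by_contra h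
      have h2 : 2 ≤ r := by omega
      have h3 : c ≤ (r - 1) * c := Nat.le_mul_of_pos_left c (by omega)
      omega
    subst hr1
    have hc1 : 1 ≤ c := by omega
    obtain ⟨e, he⟩ := card_pos.1 hc1
    rw [mem_filter] at he
    have he0 : e = ∅ := card_eq_zero.1 he.2
    subst he0
    refine ⟨{∅}, singleton_subset_iff.2 he.1, ?_, ?_, by simp⟩
    · intro f hf; rw [mem_singleton] at hf; subst hf; simp
    · intro a ha b hb hab
      rw [mem_singleton] at ha hb
      exact absurd (ha.trans hb.symm) hab
  · -- main case: k ≥ 1, r ≥ 1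
    by_contra hcon
    push_neg at hcon
    set S := 𝒢.sup id with hSdef
    have hS : ∀ e ∈ 𝒢, e ⊆ S := fun e he => le_sup (f := id) he
    set n := S.card with hndef
    set ι : V → ℕ := fun v => if h : v ∈ S then (S.equivFin ⟨v, h⟩ : ℕ) else 0 with hιdef
    have hι_lt : ∀ v ∈ S, ι v < n := by
      intro v hv
      simp only [hιdef, dif_pos hv]
      exact (S.equivFin ⟨v, hv⟩).isLt
    have hι_inj : ∀ x ∈ S, ∀ y ∈ S, ι x = ι y → x = y := by
      intro x hx y hy h
      simp only [hιdef, dif_pos hx, dif_pos hy] at h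
      have := S.equivFin.injective (Fin.ext h)
      exact congrArg Subtype.val this
    set Φ : Finset V → Finset ℕ := fun e => e.image ι with hΦdef
    have hΦcard : ∀ e, e ⊆ S → (Φ e).card = e.card := by
      intro e he
      exact card_image_of_injOn fun x hx y hy h => hι_inj x (he hx) y (he hy) h
    have hΦinj : ∀ e, e ⊆ S → ∀ f, f ⊆ S → Φ e = Φ f → e = f := by
      intro e he f hf h
      apply subset_antisymm <;> intro x hx
      · have : ι x ∈ Φ f := h ▸ mem_image_of_mem ι hx
        obtain ⟨y, hy, hyx⟩ := mem_image.1 this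
        exact (hι_inj y (hf hy) x (he hx) hyx) ▸ hy
      · have : ι x ∈ Φ e := h ▸ mem_image_of_mem ι hx
        obtain ⟨y, hy, hyx⟩ := mem_image.1 this
        exact (hι_inj y (he hy) x (hf hx) hyx) ▸ hy
    set F := (𝒢.filter fun e => e.card = k).image Φ with hFdef
    have hFcard : F.card = (𝒢.filter fun e => e.card = k).card := by
      apply card_image_of_injOn
      intro e he f hf h
      rw [mem_coe, mem_filter] at he hf
      exact hΦinj e (hS e he.1) f (hS f hf.1) h
    have hFuni : ∀ t ∈ F, t.card = k := by
      intro t ht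
      obtain ⟨e, he, rfl⟩ := mem_image.1 ht
      rw [mem_filter] at he
      rw [hΦcard e (hS e he.1)]
      exact he.2
    have hFbound : ∀ t ∈ F, t ⊆ range n := by
      intro t ht
      obtain ⟨e, he, rfl⟩ := mem_image.1 ht
      rw [mem_filter] at he
      intro x hx
      obtain ⟨y, hy, rfl⟩ := mem_image.1 hx
      rw [mem_range]
      exact hι_lt y (hS e he.1 hy)
    have herase : ∀ e, e ⊆ S → ∀ x ∈ e, (Φ e).erase (ι x) = Φ (e.erase x) := by
      intro e he x hx
      ext y
      simp only [mem_erase, hΦdef, mem_image]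
      constructor
      · rintro ⟨hne, z, hz, rfl⟩
        exact ⟨z, ⟨fun h => hne (congrArg ι h), hz⟩, rfl⟩
      · rintro ⟨z, ⟨hzx, hz⟩, rfl⟩
        exact ⟨fun h => hzx (hι_inj z (he hz) x (he hx) h), z, hz, rfl⟩
    have hshadow : ∂ F ⊆ (𝒢.filter fun e => e.card = k - 1).image Φ := by
      intro t ht
      obtain ⟨tt, htt, a, ha, rfl⟩ := mem_shadow_iff.1 ht
      obtain ⟨e, he, rfl⟩ := mem_image.1 htt
      rw [mem_filter] at he
      obtain ⟨x, hx, rfl⟩ := mem_image.1 ha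
      rw [herase e (hS e he.1) x hx]
      apply mem_image_of_mem
      rw [mem_filter]
      exact ⟨hdown e he.1 _ (erase_subset _ _), by rw [card_erase_of_mem hx, he.2]⟩
    have hnu : NuLe F (r - 1) := by
      intro M' hM' hm'
      obtain ⟨M, hMsub, hMim⟩ := subset_image_iff.1 hM'
      have hMe : ∀ e ∈ M, e ∈ 𝒢 ∧ e.card = k := by
        intro e he
        have := hMsub he
        rwa [mem_filter] at this
      have hMmatch : ∀ e ∈ M, ∀ f ∈ M, e ≠ f → Disjoint e f := by
        intro e he f hf hef
        have hΦne : Φ e ≠ Φ f := fun h =>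
          hef (hΦinj e (hS e (hMe e he).1) f (hS f (hMe f hf).1) h)
        have hd := hm' (Φ e) (hMim ▸ mem_image_of_mem Φ he)
          (Φ f) (hMim ▸ mem_image_of_mem Φ hf) hΦne
        rw [disjoint_left]
        intro x hxe hxf
        exact (disjoint_left.1 hd) (mem_image_of_mem ι hxe) (mem_image_of_mem ι hxf)
      have hlt := hcon M (fun e he => (hMe e he).1) (fun e he => (hMe e he).2) hMmatch
      calc M'.card = (M.image Φ).card := by rw [hMim]
        _ ≤ M.card := card_image_le
        _ ≤ r - 1 := by omega
    have hfr := frankl n F k (r - 1) hk hFuni hFbound hnu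
    have hsh : (∂ F).card ≤ (𝒢.filter fun e => e.card = k - 1).card :=
      (card_le_card hshadow).trans card_image_le
    have h1 : (r - 1) * (∂ F).card ≤ (r - 1) * (𝒢.filter fun e => e.card = k - 1).card :=
      Nat.mul_le_mul_left _ hsh
    rw [hFcard] at hfr
    omega


end FranklMachinery

/-- If a `k`-complex `𝒢` satisfies `e_k(𝒢) ≥ (r-1)·e_{k-1}(𝒢) + 1`,
then its `k`-uniform level contains a matching of size at least `r`. -/
theorem matching_of_ratio (k r : ℕ) (𝒢 : Finset (Finset V))
    (hdown : ∀ e ∈ 𝒢, ∀ f, f ⊆ e → f ∈ 𝒢)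
    (hbound : ∀ e ∈ 𝒢, e.card ≤ k)
    (hcount : (r - 1) * ecount 𝒢 (k - 1) + 1 ≤ ecount 𝒢 k) :
    ∃ M : Finset (Finset V), M ⊆ 𝒢 ∧ (∀ e ∈ M, e.card = k) ∧
      (∀ e ∈ M, ∀ f ∈ M, e ≠ f → Disjoint e f) ∧ r ≤ M.card :=
  matching_of_ratio' k r 𝒢 hdown hbound hcount
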